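/- The feasible region P_k for consecutive patterns, defined as the set of vectors v ∈ [0,1]^{S_k} for which there exists a sequence of permutations σ^m with |σ^m| → ∞ and cocc(π,σ^m)/|σ^m| → v_π for all π ∈ S_k, is a convex subset of [0,1]^{S_k}. -/

import Mathlib

open Filter Finset

/-- The value of the permutation `σ` at a natural-number index (junk value `0` out of range). -/
def papp {n : ℕ} (σ : Equiv.Perm (Fin n)) (j : ℕ) : ℕ :=
  if h : j < n then (σ ⟨j, h⟩ : ℕ) else 0

/-- The number of consecutive occurrences of the pattern `π` in `σ`:
the number of intervals `i, i+1, …, i+k-1` of indices such that `σ` restricted to them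
is in the same relative order as `π`. -/
def cocc {k n : ℕ} (π : Equiv.Perm (Fin k)) (σ : Equiv.Perm (Fin n)) : ℕ :=
  ((Finset.range (n + 1 - k)).filter
    (fun i => ∀ a b : Fin k, π a < π b ↔ papp σ (i + (a : ℕ)) < papp σ (i + (b : ℕ)))).card

/-- The direct sum `τ ⊕ σ` of two permutations: `τ(1)…τ(m)(σ(1)+m)…(σ(n)+m)`. -/
def dsum {m n : ℕ} (τ : Equiv.Perm (Fin m)) (σ : Equiv.Perm (Fin n)) :
    Equiv.Perm (Fin (m + n)) :=
  finSumFinEquiv.permCongr (Equiv.sumCongr τ σ)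

lemma papp_lt {n : ℕ} (σ : Equiv.Perm (Fin n)) (j : ℕ) (h : j < n) : papp σ j < n := by
  rw [papp, dif_pos h]; exact (σ ⟨j, h⟩).isLt

lemma papp_dsum_left {m n : ℕ} (τ : Equiv.Perm (Fin m)) (σ : Equiv.Perm (Fin n))
    {j : ℕ} (hj : j < m) : papp (dsum τ σ) j = papp τ j := by
  have hj' : j < m + n := lt_of_lt_of_le hj (Nat.le_add_right m n)
  rw [papp, papp, dif_pos hj', dif_pos hj]
  have : (⟨j, hj'⟩ : Fin (m + n)) = Fin.castAdd n ⟨j, hj⟩ := rfl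
  rw [dsum, Equiv.permCongr_apply, this, finSumFinEquiv_symm_apply_castAdd]
  simp

lemma papp_dsum_right {m n : ℕ} (τ : Equiv.Perm (Fin m)) (σ : Equiv.Perm (Fin n))
    {j : ℕ} (hj : j < n) : papp (dsum τ σ) (m + j) = m + papp σ j := by
  have hj' : m + j < m + n := by omega
  rw [papp, papp, dif_pos hj', dif_pos hj]
  have : (⟨m + j, hj'⟩ : Fin (m + n)) = Fin.natAdd m ⟨j, hj⟩ := rfl
  rw [dsum, Equiv.permCongr_apply, this, finSumFinEquiv_symm_apply_natAdd]
  simp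

lemma cocc_dsum_lower {k m n : ℕ} (hk : 1 ≤ k) (π : Equiv.Perm (Fin k))
    (τ : Equiv.Perm (Fin m)) (σ : Equiv.Perm (Fin n)) :
    cocc π τ + cocc π σ ≤ cocc π (dsum τ σ) := by
  classical
  rw [cocc, cocc, cocc]
  set P : Equiv.Perm (Fin (m + n)) := dsum τ σ with hP
  set A := (Finset.range (m + 1 - k)).filter
    (fun i => ∀ a b : Fin k, π a < π b ↔ papp τ (i + (a : ℕ)) < papp τ (i + (b : ℕ))) with hA
  set B := (Finset.range (n + 1 - k)).filter
    (fun i => ∀ a b : Fin k, π a < π b ↔ papp σ (i + (a : ℕ)) < papp σ (i + (b : ℕ))) with hB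
  set C := (Finset.range (m + n + 1 - k)).filter
    (fun i => ∀ a b : Fin k, π a < π b ↔ papp P (i + (a : ℕ)) < papp P (i + (b : ℕ))) with hC
  have hsub : A ∪ B.image (fun i => m + i) ⊆ C := by
    intro i hi
    rcases Finset.mem_union.1 hi with hi | hi
    · rw [hA, Finset.mem_filter, Finset.mem_range] at hi
      obtain ⟨hir, hocc⟩ := hi
      rw [hC, Finset.mem_filter, Finset.mem_range]
      refine ⟨by omega, fun a b => ?_⟩
      rw [papp_dsum_left τ σ (by omega : i + (a:ℕ) < m),
        papp_dsum_left τ σ (by omega : i + (b:ℕ) < m)]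
      exact hocc a b
    · rw [Finset.mem_image] at hi
      obtain ⟨j, hj, rfl⟩ := hi
      rw [hB, Finset.mem_filter, Finset.mem_range] at hj
      obtain ⟨hjr, hocc⟩ := hj
      rw [hC, Finset.mem_filter, Finset.mem_range]
      refine ⟨by omega, fun a b => ?_⟩
      rw [show m + j + (a:ℕ) = m + (j + (a:ℕ)) by omega,
        show m + j + (b:ℕ) = m + (j + (b:ℕ)) by omega,
        papp_dsum_right τ σ (by omega : j + (a:ℕ) < n),
        papp_dsum_right τ σ (by omega : j + (b:ℕ) < n)]
      simp only [Nat.add_lt_add_iff_left]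
      exact hocc a b
  have hdisj : Disjoint A (B.image (fun i => m + i)) := by
    rw [Finset.disjoint_left]
    intro i hiA hiB
    rw [hA, Finset.mem_filter, Finset.mem_range] at hiA
    rw [Finset.mem_image] at hiB
    obtain ⟨j, _, rfl⟩ := hiB
    omega
  calc A.card + B.card = (A ∪ B.image (fun i => m + i)).card := by
        rw [Finset.card_union_of_disjoint hdisj,
          Finset.card_image_of_injective _ (fun x y h => by omega)]
    _ ≤ C.card := Finset.card_le_card hsub

lemma cocc_dsum_upper {k m n : ℕ} (hk : 1 ≤ k) (π : Equiv.Perm (Fin k))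
    (τ : Equiv.Perm (Fin m)) (σ : Equiv.Perm (Fin n)) :
    cocc π (dsum τ σ) ≤ cocc π τ + cocc π σ + k := by
  classical
  rw [cocc, cocc, cocc]
  set P : Equiv.Perm (Fin (m + n)) := dsum τ σ with hP
  set A := (Finset.range (m + 1 - k)).filter
    (fun i => ∀ a b : Fin k, π a < π b ↔ papp τ (i + (a : ℕ)) < papp τ (i + (b : ℕ))) with hA
  set B := (Finset.range (n + 1 - k)).filter
    (fun i => ∀ a b : Fin k, π a < π b ↔ papp σ (i + (a : ℕ)) < papp σ (i + (b : ℕ))) with hB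
  set C := (Finset.range (m + n + 1 - k)).filter
    (fun i => ∀ a b : Fin k, π a < π b ↔ papp P (i + (a : ℕ)) < papp P (i + (b : ℕ))) with hC
  have hsub : C ⊆ A ∪ B.image (fun i => m + i) ∪ Finset.Ico (m + 1 - k) m := by
    intro i hi
    rw [hC, Finset.mem_filter, Finset.mem_range] at hi
    obtain ⟨hir, hocc⟩ := hi
    rcases lt_or_ge i m with him | him
    · rcases le_or_gt (i + k) m with hik | hik
      · refine Finset.mem_union.2 (Or.inl (Finset.mem_union.2 (Or.inl ?_)))
        rw [hA, Finset.mem_filter, Finset.mem_range]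
        refine ⟨by omega, fun a b => ?_⟩
        rw [← papp_dsum_left τ σ (by omega : i + (a:ℕ) < m),
          ← papp_dsum_left τ σ (by omega : i + (b:ℕ) < m)]
        exact hocc a b
      · exact Finset.mem_union.2 (Or.inr (Finset.mem_Ico.2 (by omega)))
    · refine Finset.mem_union.2 (Or.inl (Finset.mem_union.2 (Or.inr ?_)))
      rw [Finset.mem_image]
      refine ⟨i - m, ?_, by omega⟩
      rw [hB, Finset.mem_filter, Finset.mem_range]
      refine ⟨by omega, fun a b => ?_⟩
      have ha : (i - m) + (a:ℕ) < n := by omega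
      have hb : (i - m) + (b:ℕ) < n := by omega
      rw [← Nat.add_lt_add_iff_left (k := m), ← papp_dsum_right τ σ ha,
        ← papp_dsum_right τ σ hb,
        show m + ((i-m) + (a:ℕ)) = i + (a:ℕ) by omega,
        show m + ((i-m) + (b:ℕ)) = i + (b:ℕ) by omega]
      exact hocc a b
  calc C.card ≤ (A ∪ B.image (fun i => m + i) ∪ Finset.Ico (m + 1 - k) m).card :=
        Finset.card_le_card hsub
    _ ≤ (A ∪ B.image (fun i => m + i)).card + (Finset.Ico (m + 1 - k) m).card :=
        Finset.card_union_le _ _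
    _ ≤ (A.card + (B.image (fun i => m + i)).card) + (Finset.Ico (m + 1 - k) m).card :=
        by gcongr; exact Finset.card_union_le _ _
    _ ≤ A.card + B.card + k := by
        rw [Finset.card_image_of_injective _ (fun x y h => by omega), Nat.card_Ico]
        omega

lemma papp_finCongr {m n : ℕ} (h : m = n) (σ : Equiv.Perm (Fin m)) (j : ℕ) :
    papp ((finCongr h).permCongr σ) j = papp σ j := by
  subst h
  simp only [papp]
  split
  · congr 1
  · rfl

lemma cocc_finCongr {k m n : ℕ} (h : m = n) (π : Equiv.Perm (Fin k)) (σ : Equiv.Perm (Fin m)) :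
    cocc π ((finCongr h).permCongr σ) = cocc π σ := by
  subst h
  have hp : ∀ j, papp ((finCongr rfl).permCongr σ) j = papp σ j := papp_finCongr rfl σ
  simp only [cocc, hp]

def dsumIter {n : ℕ} (σ : Equiv.Perm (Fin n)) : (a : ℕ) → Equiv.Perm (Fin (a * n))
  | 0 => (finCongr (Nat.zero_mul n).symm).permCongr (Equiv.refl (Fin 0))
  | a + 1 => (finCongr (Nat.succ_mul a n).symm).permCongr (dsum (dsumIter σ a) σ)

lemma cocc_empty {k : ℕ} (hk : 1 ≤ k) (π : Equiv.Perm (Fin k)) (σ : Equiv.Perm (Fin 0)) :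
    cocc π σ = 0 := by
  rw [cocc]
  have : 0 + 1 - k = 0 := by omega
  rw [this]
  simp

lemma cocc_dsumIter_lower {k n : ℕ} (hk : 1 ≤ k) (π : Equiv.Perm (Fin k))
    (σ : Equiv.Perm (Fin n)) (a : ℕ) :
    a * cocc π σ ≤ cocc π (dsumIter σ a) := by
  induction a with
  | zero => simp
  | succ a ih =>
    rw [dsumIter, cocc_finCongr]
    calc (a + 1) * cocc π σ = a * cocc π σ + cocc π σ := by ring
      _ ≤ cocc π (dsumIter σ a) + cocc π σ := by gcongr
      _ ≤ cocc π (dsum (dsumIter σ a) σ) := cocc_dsum_lower hk π _ σ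

lemma cocc_dsumIter_upper {k n : ℕ} (hk : 1 ≤ k) (π : Equiv.Perm (Fin k))
    (σ : Equiv.Perm (Fin n)) (a : ℕ) :
    cocc π (dsumIter σ a) ≤ a * cocc π σ + a * k := by
  induction a with
  | zero =>
    rw [dsumIter, cocc_finCongr, cocc_empty hk]
    simp
  | succ a ih =>
    rw [dsumIter, cocc_finCongr]
    calc cocc π (dsum (dsumIter σ a) σ) ≤ cocc π (dsumIter σ a) + cocc π σ + k :=
          cocc_dsum_upper hk π _ σ
      _ ≤ (a * cocc π σ + a * k) + cocc π σ + k := by gcongr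
      _ = (a + 1) * cocc π σ + (a + 1) * k := by ring


/-- The feasible region `P_k` for consecutive patterns: the set of vectors
`v ∈ ℝ^{S_k}` for which there is a sequence of permutations whose sizes tend to
infinity and whose normalized consecutive-occurrence vectors tend to `v`. -/
def feasibleRegion (k : ℕ) : Set (Equiv.Perm (Fin k) → ℝ) :=
  { v | ∃ (N : ℕ → ℕ) (σ : ∀ m, Equiv.Perm (Fin (N m))),
      Filter.Tendsto N Filter.atTop Filter.atTop ∧
      ∀ π : Equiv.Perm (Fin k),
        Filter.Tendsto (fun m => (cocc π (σ m) : ℝ) / (N m : ℝ)) Filter.atTop (nhds (v π)) }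



set_option maxHeartbeats 2000000 in
lemma feasible_combo {k : ℕ} (hk : 1 ≤ k) {v w : Equiv.Perm (Fin k) → ℝ}
    (hv : v ∈ feasibleRegion k) (hw : w ∈ feasibleRegion k) {θ μ : ℝ}
    (hθ : 0 ≤ θ) (hμ : 0 ≤ μ) (hθμ : θ + μ = 1) :
    θ • v + μ • w ∈ feasibleRegion k := by
  obtain ⟨Nσ, σs, hNσ, hvl⟩ := hv
  obtain ⟨Nτ, τs, hNτ, hwl⟩ := hw
  have hθ1 : θ ≤ 1 := by linarith
  have hμ1 : μ ≤ 1 := by linarith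
  set a : ℕ → ℕ := fun m => ⌊θ * m⌋₊ * Nτ m with ha
  set b : ℕ → ℕ := fun m => ⌊μ * m⌋₊ * Nσ m with hb
  set N : ℕ → ℕ := fun m => a m * Nσ m + b m * Nτ m with hNdef
  set F : ℕ → ℕ := fun m => ⌊θ * m⌋₊ + ⌊μ * m⌋₊ with hFdef
  have hFm : ∀ m : ℕ, m ≤ F m + 1 := by
    intro m
    have h1 : (m : ℝ) = θ * m + μ * m := by rw [← add_mul, hθμ, one_mul]
    have h2 : θ * m < ⌊θ * m⌋₊ + 1 := Nat.lt_floor_add_one _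
    have h3 : μ * m < ⌊μ * m⌋₊ + 1 := Nat.lt_floor_add_one _
    have h4 : (m : ℝ) < (F m : ℝ) + 2 := by
      show (m : ℝ) < ((⌊θ * m⌋₊ + ⌊μ * m⌋₊ : ℕ) : ℝ) + 2
      push_cast; linarith
    have : m < F m + 2 := by exact_mod_cast h4
    omega
  have hNF : ∀ m : ℕ, N m = F m * (Nσ m * Nτ m) := by
    intro m
    show ⌊θ * m⌋₊ * Nτ m * Nσ m + ⌊μ * m⌋₊ * Nσ m * Nτ m =
      (⌊θ * m⌋₊ + ⌊μ * m⌋₊) * (Nσ m * Nτ m)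
    ring
  have hNtop : Tendsto N atTop atTop := by
    apply tendsto_atTop_mono' atTop ?_ (tendsto_sub_atTop_nat 1)
    filter_upwards [hNσ.eventually_ge_atTop 1, hNτ.eventually_ge_atTop 1] with m h1 h2
    have h5 : F m ≤ F m * (Nσ m * Nτ m) := Nat.le_mul_of_pos_right _ (by positivity)
    have := hFm m
    rw [hNF m] at *
    omega
  refine ⟨N, fun m => dsum (dsumIter (σs m) (a m)) (dsumIter (τs m) (b m)), hNtop, ?_⟩
  intro π
  have hcastσ : Tendsto (fun m => (Nσ m : ℝ)) atTop atTop :=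
    tendsto_natCast_atTop_atTop.comp hNσ
  have hcastτ : Tendsto (fun m => (Nτ m : ℝ)) atTop atTop :=
    tendsto_natCast_atTop_atTop.comp hNτ
  have hFtop : Tendsto F atTop atTop := by
    apply tendsto_atTop_mono' atTop ?_ (tendsto_sub_atTop_nat 1)
    filter_upwards with m
    have := hFm m
    omega
  have hcastF : Tendsto (fun m => (F m : ℝ)) atTop atTop :=
    tendsto_natCast_atTop_atTop.comp hFtop
  have h1 : Tendsto (fun m : ℕ => (⌊θ * m⌋₊ : ℝ) / m) atTop (nhds θ) :=
    (tendsto_nat_floor_mul_div_atTop hθ).comp tendsto_natCast_atTop_atTop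
  have h2 : Tendsto (fun m : ℕ => (⌊μ * m⌋₊ : ℝ) / m) atTop (nhds μ) :=
    (tendsto_nat_floor_mul_div_atTop hμ).comp tendsto_natCast_atTop_atTop
  have h3 : Tendsto (fun m : ℕ => (F m : ℝ) / m) atTop (nhds 1) := by
    have h := h1.add h2
    rw [hθμ] at h
    apply h.congr
    intro m
    show (⌊θ * m⌋₊ : ℝ) / m + (⌊μ * m⌋₊ : ℝ) / m = ((⌊θ * m⌋₊ + ⌊μ * m⌋₊ : ℕ) : ℝ) / m
    push_cast
    rw [add_div]
  have hr : Tendsto (fun m : ℕ => (⌊θ * m⌋₊ : ℝ) / F m) atTop (nhds θ) := by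
    have h := h1.div h3 one_ne_zero
    rw [div_one] at h
    apply h.congr' _
    filter_upwards [eventually_ge_atTop 1] with m hm
    have hm0 : (m : ℝ) ≠ 0 := by positivity
    by_cases hF0 : (F m : ℝ) = 0
    · simp [hF0]
    · simp only [Pi.div_apply]
      field_simp
  have hs : Tendsto (fun m : ℕ => (⌊μ * m⌋₊ : ℝ) / F m) atTop (nhds μ) := by
    have h := h2.div h3 one_ne_zero
    rw [div_one] at h
    apply h.congr' _
    filter_upwards [eventually_ge_atTop 1] with m hm
    have hm0 : (m : ℝ) ≠ 0 := by positivity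
    by_cases hF0 : (F m : ℝ) = 0
    · simp [hF0]
    · simp only [Pi.div_apply]
      field_simp
  have hmF : Tendsto (fun m : ℕ => (m : ℝ) / F m) atTop (nhds 1) := by
    have h := (tendsto_const_nhds (x := (1:ℝ)) (f := atTop)).div h3 one_ne_zero
    rw [div_one] at h
    apply h.congr' _
    filter_upwards [eventually_ge_atTop 1] with m hm
    have hm0 : (m : ℝ) ≠ 0 := by positivity
    by_cases hF0 : (F m : ℝ) = 0
    · simp [hF0]
    · simp only [Pi.div_apply]
      field_simp
  have hinvσ : Tendsto (fun m => (Nσ m : ℝ)⁻¹) atTop (nhds 0) := hcastσ.inv_tendsto_atTop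
  have hinvτ : Tendsto (fun m => (Nτ m : ℝ)⁻¹) atTop (nhds 0) := hcastτ.inv_tendsto_atTop
  have hinvF : Tendsto (fun m => (F m : ℝ)⁻¹) atTop (nhds 0) := hcastF.inv_tendsto_atTop
  have hLlim : Tendsto (fun m : ℕ => ((⌊θ * m⌋₊ : ℝ) / F m) * ((cocc π (σs m) : ℝ) / Nσ m) +
      ((⌊μ * m⌋₊ : ℝ) / F m) * ((cocc π (τs m) : ℝ) / Nτ m)) atTop
      (nhds (θ * v π + μ * w π)) :=
    (hr.mul (hvl π)).add (hs.mul (hwl π))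
  have hGlim : Tendsto (fun m : ℕ => (k : ℝ) * ((m : ℝ) / F m * (Nσ m : ℝ)⁻¹ +
      (m : ℝ) / F m * (Nτ m : ℝ)⁻¹ + (F m : ℝ)⁻¹ * ((Nσ m : ℝ)⁻¹ * (Nτ m : ℝ)⁻¹))) atTop
      (nhds 0) := by
    have h : Tendsto _ atTop (nhds ((k:ℝ) * (1 * 0 + 1 * 0 + 0 * (0 * 0)))) :=
      tendsto_const_nhds.mul (((hmF.mul hinvσ).add (hmF.mul hinvτ)).add
        (hinvF.mul (hinvσ.mul hinvτ)))
    simpa using h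
  have hElim : Tendsto (fun m : ℕ => ((a m + b m + 1) * k : ℝ) / N m) atTop (nhds 0) := by
    apply tendsto_of_tendsto_of_tendsto_of_le_of_le' tendsto_const_nhds hGlim
    · filter_upwards with m
      positivity
    · filter_upwards [hNσ.eventually_ge_atTop 1, hNτ.eventually_ge_atTop 1,
        eventually_ge_atTop 3] with m hσ1 hτ1 hm3
      have hF2 : 2 ≤ F m := by have := hFm m; omega
      have hab : a m ≤ m * Nτ m ∧ b m ≤ m * Nσ m := by
        have hfθ : ⌊θ * m⌋₊ ≤ m := by
          calc ⌊θ * m⌋₊ ≤ ⌊(m : ℝ)⌋₊ := Nat.floor_mono (by nlinarith)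
            _ = m := Nat.floor_natCast m
        have hfμ : ⌊μ * m⌋₊ ≤ m := by
          calc ⌊μ * m⌋₊ ≤ ⌊(m : ℝ)⌋₊ := Nat.floor_mono (by nlinarith)
            _ = m := Nat.floor_natCast m
        have h5 : a m ≤ m * Nτ m := Nat.mul_le_mul_right _ hfθ
        have h6 : b m ≤ m * Nσ m := Nat.mul_le_mul_right _ hfμ
        exact ⟨h5, h6⟩
      have hF0 : (F m : ℝ) ≠ 0 := by positivity
      have hσ0 : (Nσ m : ℝ) ≠ 0 := by positivity
      have hτ0 : (Nτ m : ℝ) ≠ 0 := by positivity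
      have hGeq : (k : ℝ) * ((m : ℝ) / F m * (Nσ m : ℝ)⁻¹ +
          (m : ℝ) / F m * (Nτ m : ℝ)⁻¹ + (F m : ℝ)⁻¹ * ((Nσ m : ℝ)⁻¹ * (Nτ m : ℝ)⁻¹)) =
          ((m * Nτ m + m * Nσ m + 1) * k : ℝ) / N m := by
        rw [hNF m]
        push_cast
        field_simp
      rw [hGeq]
      gcongr
      · exact_mod_cast hab.1
      · exact_mod_cast hab.2
  have hcocc_low : ∀ m, a m * cocc π (σs m) + b m * cocc π (τs m) ≤
      cocc π (dsum (dsumIter (σs m) (a m)) (dsumIter (τs m) (b m))) := fun m =>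
    le_trans (add_le_add (cocc_dsumIter_lower hk π (σs m) (a m))
      (cocc_dsumIter_lower hk π (τs m) (b m))) (cocc_dsum_lower hk π _ _)
  have hcocc_up : ∀ m, cocc π (dsum (dsumIter (σs m) (a m)) (dsumIter (τs m) (b m))) ≤
      a m * cocc π (σs m) + b m * cocc π (τs m) + (a m + b m + 1) * k := by
    intro m
    have h1 := cocc_dsum_upper hk π (dsumIter (σs m) (a m)) (dsumIter (τs m) (b m))
    have h2 := cocc_dsumIter_upper hk π (σs m) (a m)
    have h3 := cocc_dsumIter_upper hk π (τs m) (b m)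
    have h4 : (a m + b m + 1) * k = a m * k + b m * k + k := by ring
    omega
  have goalEq : (θ • v + μ • w) π = θ * v π + μ * w π := rfl
  rw [goalEq]
  apply tendsto_of_tendsto_of_tendsto_of_le_of_le' hLlim
    (by simpa using hLlim.add hElim :
      Tendsto (fun m : ℕ => (((⌊θ * m⌋₊ : ℝ) / F m) * ((cocc π (σs m) : ℝ) / Nσ m) +
        ((⌊μ * m⌋₊ : ℝ) / F m) * ((cocc π (τs m) : ℝ) / Nτ m)) +
        ((a m + b m + 1) * k : ℝ) / N m) atTop (nhds (θ * v π + μ * w π)))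
  · filter_upwards [hNσ.eventually_ge_atTop 1, hNτ.eventually_ge_atTop 1,
      eventually_ge_atTop 3] with m hσ1 hτ1 hm3
    have hF2 : 2 ≤ F m := by have := hFm m; omega
    have hF0 : (F m : ℝ) ≠ 0 := by positivity
    have hσ0 : (Nσ m : ℝ) ≠ 0 := by positivity
    have hτ0 : (Nτ m : ℝ) ≠ 0 := by positivity
    have hLeq : ((⌊θ * m⌋₊ : ℝ) / F m) * ((cocc π (σs m) : ℝ) / Nσ m) +
        ((⌊μ * m⌋₊ : ℝ) / F m) * ((cocc π (τs m) : ℝ) / Nτ m) =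
        ((a m * cocc π (σs m) + b m * cocc π (τs m) : ℕ) : ℝ) / N m := by
      rw [hNF m]
      simp only [ha, hb]
      push_cast
      field_simp
    rw [hLeq]
    gcongr
    exact_mod_cast hcocc_low m
  · filter_upwards [hNσ.eventually_ge_atTop 1, hNτ.eventually_ge_atTop 1,
      eventually_ge_atTop 3] with m hσ1 hτ1 hm3
    have hF2 : 2 ≤ F m := by have := hFm m; omega
    have hF0 : (F m : ℝ) ≠ 0 := by positivity
    have hσ0 : (Nσ m : ℝ) ≠ 0 := by positivity
    have hτ0 : (Nτ m : ℝ) ≠ 0 := by positivity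
    have hLeq : ((⌊θ * m⌋₊ : ℝ) / F m) * ((cocc π (σs m) : ℝ) / Nσ m) +
        ((⌊μ * m⌋₊ : ℝ) / F m) * ((cocc π (τs m) : ℝ) / Nτ m) +
        ((a m + b m + 1) * k : ℝ) / N m =
        ((a m * cocc π (σs m) + b m * cocc π (τs m) + (a m + b m + 1) * k : ℕ) : ℝ) / N m := by
      rw [hNF m]
      simp only [ha, hb]
      push_cast
      field_simp
    rw [hLeq]
    gcongr
    exact_mod_cast hcocc_up m

lemma succ_div_tendsto {N : ℕ → ℕ} (hN : Tendsto N atTop atTop) :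
    Tendsto (fun m => ((N m : ℝ) + 1) / (N m : ℝ)) atTop (nhds 1) := by
  have h : Tendsto (fun m => (N m : ℝ)) atTop atTop := tendsto_natCast_atTop_atTop.comp hN
  have h2 : Tendsto (fun m => 1 + (N m : ℝ)⁻¹) atTop (nhds (1 + 0)) :=
    tendsto_const_nhds.add h.inv_tendsto_atTop
  rw [add_zero] at h2
  apply h2.congr' _
  filter_upwards [hN.eventually_ge_atTop 1] with m hm
  have h0 : (N m : ℝ) ≠ 0 := by positivity
  field_simp

lemma cocc_zero {n : ℕ} (π : Equiv.Perm (Fin 0)) (σ : Equiv.Perm (Fin n)) :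
    cocc π σ = n + 1 := by
  rw [cocc, Finset.filter_true_of_mem, Finset.card_range]
  · omega
  · intro i _ a
    exact a.elim0

lemma region_zero : feasibleRegion 0 = {fun _ => (1 : ℝ)} := by
  apply Set.Subset.antisymm
  · intro v hv
    obtain ⟨N, σs, hN, h⟩ := hv
    rw [Set.mem_singleton_iff]
    funext π
    have h1 : Tendsto (fun m => (cocc π (σs m) : ℝ) / (N m : ℝ)) atTop (nhds 1) := by
      apply (succ_div_tendsto hN).congr
      intro m
      rw [cocc_zero]
      push_cast
      ring_nf
    exact tendsto_nhds_unique (h π) h1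
  · intro v hv
    rw [Set.mem_singleton_iff] at hv
    subst hv
    refine ⟨id, fun m => Equiv.refl _, tendsto_id, fun π => ?_⟩
    apply (succ_div_tendsto tendsto_id).congr
    intro m
    rw [cocc_zero]
    push_cast
    ring_nf


/-- The feasible region `P_k` for consecutive patterns is a convex subset of `[0,1]^{S_k}`. -/
theorem feasibleRegion_convex (k : ℕ) :
    Convex ℝ (feasibleRegion k) ∧
      ∀ v ∈ feasibleRegion k, ∀ π : Equiv.Perm (Fin k), v π ∈ Set.Icc (0 : ℝ) 1 := by
  constructor
  · rcases Nat.eq_zero_or_pos k with hk | hk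
    · subst hk
      rw [region_zero]
      exact convex_singleton _
    · intro v hv w hw θ μ hθ hμ hθμ
      exact feasible_combo hk hv hw hθ hμ hθμ
  · intro v hv π
    obtain ⟨N, σs, hN, h⟩ := hv
    constructor
    · exact ge_of_tendsto' (h π) (fun m => by positivity)
    · apply le_of_tendsto_of_tendsto' (h π) (succ_div_tendsto hN)
      intro m
      have hle : cocc π (σs m) ≤ N m + 1 := by
        refine le_trans (Finset.card_filter_le _ _) ?_
        rw [Finset.card_range]
        omega
      by_cases h0 : (N m : ℝ) = 0
      · simp [h0]
      · have hpos : (0 : ℝ) < N m := lt_of_le_of_ne (Nat.cast_nonneg _) (Ne.symm h0)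
        gcongr
        exact_mod_cast hle
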